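/- There exists an NWBTS(5;b) for every nonnegative integer b with b ≡ 3, 4, 6 or 7 (mod 10), and there exists an NWBTS(11;b) for every nonnegative integer b with b ≡ 18, 19, 36 or 37 (mod 55). -/

import Mathlib

namespace DataPlacement

open Finset

variable {α : Type*} [DecidableEq α]

/-- Number of blocks of the family `F` (with multiplicity) containing `T`. -/
def lamF (F : Multiset (Finset α)) (T : Finset α) : ℕ :=
  Multiset.card (F.filter fun B => T ⊆ B)

/-- Triple system with `b` blocks on a point set `X` of size `v`. -/
def IsTSOn (X : Finset α) (v b : ℕ) (F : Multiset (Finset α)) : Prop :=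
  X.card = v ∧ Multiset.card F = b ∧ ∀ B ∈ F, B.card = 3 ∧ B ⊆ X

/-- `(l, e)` is the pair associated with `(v, b)`:
`3b = l·v(v−1)/2 + e` with `−v/2 < e < v/2`. -/
def AssocPair (v b l : ℕ) (e : ℤ) : Prop :=
  6 * (b : ℤ) = (l : ℤ) * v * ((v : ℤ) - 1) + 2 * e ∧
    -(v : ℤ) < 2 * e ∧ 2 * e < (v : ℤ)

/-- Condition (C1). -/
def CondC1 (v b : ℕ) : Prop :=
  v % 3 = 2 ∧ ∃ l : ℕ, 0 < l ∧
    ((v % 6 = 5 ∧ (l % 3 = 1 ∨ l % 3 = 2)) ∨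
     (v % 6 = 2 ∧ (l % 6 = 2 ∨ l % 6 = 4))) ∧
    (b = l * v * (v - 1) / 6 ∨ b = (l * v * (v - 1) + 5) / 6)

/-- Condition (C2). -/
def CondC2 (v b : ℕ) : Prop :=
  v % 2 = 0 ∧ ∃ l : ℕ, 0 < l ∧ l % 2 = 1 ∧
    (l : ℤ) * v * ((v : ℤ) - 1) - v < 6 * (b : ℤ) ∧
    6 * (b : ℤ) < (l : ℤ) * v * ((v : ℤ) - 1) + v

/-- Pairs of points of `X` whose block count equals `l + i`. -/
def Dlev (X : Finset α) (F : Multiset (Finset α)) (l : ℕ) (i : ℤ) :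
    Finset (Finset α) :=
  (X.powersetCard 2).filter fun p => (lamF F p : ℤ) = (l : ℤ) + i

/-- Every pair of points of `X` lies in `l−1`, `l`, or `l+1` blocks. -/
def PairRangeOn (X : Finset α) (F : Multiset (Finset α)) (l : ℕ) : Prop :=
  ∀ p ∈ X.powersetCard 2,
    (l : ℤ) - 1 ≤ (lamF F p : ℤ) ∧ (lamF F p : ℤ) ≤ (l : ℤ) + 1

def IsTriangle (D : Finset (Finset α)) : Prop :=
  ∃ x y z : α, x ≠ y ∧ x ≠ z ∧ y ≠ z ∧
    D = {({x, y} : Finset α), {y, z}, {x, z}}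

def IsFourCycle (D : Finset (Finset α)) : Prop :=
  ∃ x y z w : α, x ≠ y ∧ x ≠ z ∧ x ≠ w ∧ y ≠ z ∧ y ≠ w ∧ z ≠ w ∧
    D = {({x, y} : Finset α), {y, z}, {z, w}, {x, w}}

/-- `D` is a perfect matching on the point set `X`. -/
def IsPerfectMatchingOn (X : Finset α) (D : Finset (Finset α)) : Prop :=
  (∀ p ∈ D, p.card = 2 ∧ p ⊆ X) ∧ ∀ x ∈ X, ∃! p, p ∈ D ∧ x ∈ p

/-- Defect-graph shape required for nearly 2-balance under (C1). -/
def C1ShapeOn (X : Finset α) (F : Multiset (Finset α)) (l : ℕ) (e : ℤ) : Prop :=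
  (e = 1 ∧ IsTriangle (Dlev X F l 1 ∪ Dlev X F l (-1)) ∧
     (Dlev X F l 1).card = 2 ∧ (Dlev X F l (-1)).card = 1) ∨
  (e = -1 ∧ IsTriangle (Dlev X F l 1 ∪ Dlev X F l (-1)) ∧
     (Dlev X F l 1).card = 1 ∧ (Dlev X F l (-1)).card = 2) ∨
  (e = 2 ∧ IsFourCycle (Dlev X F l 1 ∪ Dlev X F l (-1)) ∧
     (Dlev X F l 1).card = 3 ∧ (Dlev X F l (-1)).card = 1) ∨
  (e = -2 ∧ IsFourCycle (Dlev X F l 1 ∪ Dlev X F l (-1)) ∧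
     (Dlev X F l 1).card = 1 ∧ (Dlev X F l (-1)).card = 3)

/-- Defect-graph shape required for nearly 2-balance under (C2)
(here `v = X.card`). -/
def C2ShapeOn (X : Finset α) (v : ℕ) (F : Multiset (Finset α)) (l : ℕ) (e : ℤ) : Prop :=
  (((v : ℤ) - 2 * e) % 4 = 0 ∧
    IsPerfectMatchingOn X (Dlev X F l 1 ∪ Dlev X F l (-1)) ∧
    4 * ((Dlev X F l 1).card : ℤ) = (v : ℤ) + 2 * e ∧
    4 * ((Dlev X F l (-1)).card : ℤ) = (v : ℤ) - 2 * e) ∨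
  (((v : ℤ) - 2 * e) % 4 ≠ 0 ∧
    ∃ (c a₂ a₃ a₄ : α) (star : Finset (Finset α)),
      c ∈ X ∧ a₂ ∈ X ∧ a₃ ∈ X ∧ a₄ ∈ X ∧
      c ≠ a₂ ∧ c ≠ a₃ ∧ c ≠ a₄ ∧ a₂ ≠ a₃ ∧ a₂ ≠ a₄ ∧ a₃ ≠ a₄ ∧
      star = {({c, a₂} : Finset α), {c, a₃}, {c, a₄}} ∧
      star ⊆ Dlev X F l 1 ∪ Dlev X F l (-1) ∧
      IsPerfectMatchingOn (X \ {c, a₂, a₃, a₄})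
        ((Dlev X F l 1 ∪ Dlev X F l (-1)) \ star) ∧
      (((star ∩ Dlev X F l 1).card = 2 ∧ (star ∩ Dlev X F l (-1)).card = 1 ∧
          4 * (((Dlev X F l 1) \ star).card : ℤ) = (v : ℤ) - 6 + 2 * e ∧
          4 * (((Dlev X F l (-1)) \ star).card : ℤ) = (v : ℤ) - 2 - 2 * e) ∨
        ((star ∩ Dlev X F l 1).card = 1 ∧ (star ∩ Dlev X F l (-1)).card = 2 ∧
          4 * (((Dlev X F l 1) \ star).card : ℤ) = (v : ℤ) - 2 + 2 * e ∧
          4 * (((Dlev X F l (-1)) \ star).card : ℤ) = (v : ℤ) - 6 - 2 * e)))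

/-- `F` is 3-balanced on `X`: the multiplicities of any two triples of `X`
differ by at most one. -/
def ThreeBalancedOn (X : Finset α) (F : Multiset (Finset α)) : Prop :=
  ∀ T₁ ∈ X.powersetCard 3, ∀ T₂ ∈ X.powersetCard 3, F.count T₁ ≤ F.count T₂ + 1

/-- Nearly well-balanced triple system NWBTS(v;b) on the point set `X`. -/
def IsNWBTSOn (X : Finset α) (v b : ℕ) (F : Multiset (Finset α)) : Prop :=
  IsTSOn X v b F ∧ ThreeBalancedOn X F ∧
  ∃ (l : ℕ) (e : ℤ), 0 < l ∧ AssocPair v b l e ∧ PairRangeOn X F l ∧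
    ((CondC1 v b ∧ C1ShapeOn X F l e) ∨ (CondC2 v b ∧ C2ShapeOn X v F l e))

/-- `B` is an S_mu(2,3,·) design on the point set `X`. -/
def IsSDesignOn (X : Finset α) (mu : ℕ) (B : Multiset (Finset α)) : Prop :=
  (∀ A ∈ B, A.card = 3 ∧ A ⊆ X) ∧ ∀ p ∈ X.powersetCard 2, lamF B p = mu

/-- `B` is a GDD_mu(2,3,·) of type `1^{·}u^1` on `X` with long group `U`. -/
def IsGDD1u (X : Finset α) (mu u : ℕ) (U : Finset α) (B : Multiset (Finset α)) : Prop :=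
  U ⊆ X ∧ U.card = u ∧
  (∀ A ∈ B, A.card = 3 ∧ A ⊆ X ∧ (A ∩ U).card ≤ 1) ∧
  ∀ p ∈ X.powersetCard 2, ¬ p ⊆ U → lamF B p = mu

/-- `B` is a GDD_mu(2,3,·) with group family `G`. -/
def IsGDDgroups (mu : ℕ) {n : ℕ} (G : Fin n → Finset α) (B : Multiset (Finset α)) : Prop :=
  (∀ A ∈ B, A.card = 3 ∧ A ⊆ Finset.univ.biUnion G ∧ ∀ i, (A ∩ G i).card ≤ 1) ∧
  ∀ x y : α, x ≠ y → (∃ i j, i ≠ j ∧ x ∈ G i ∧ y ∈ G j) → lamF B {x, y} = mu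

/-- Nearly group divisible design NGDD(2,3,·) of type `2^{(m,n)}u^1` on `X`. -/
def IsNGDD (X : Finset α) (m n u : ℕ) (G : Fin (m + n) → Finset α) (U : Finset α)
    (B : Multiset (Finset α)) : Prop :=
  (∀ i, (G i).card = 2 ∧ G i ⊆ X) ∧ U.card = u ∧ U ⊆ X ∧
  (∀ i j, i ≠ j → Disjoint (G i) (G j)) ∧ (∀ i, Disjoint (G i) U) ∧
  U ∪ Finset.univ.biUnion G = X ∧
  (∀ A ∈ B, A.card = 3 ∧ A ⊆ X) ∧
  (∀ i : Fin (m + n), (i : ℕ) < m → lamF B (G i) = 2) ∧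
  (∀ i : Fin (m + n), m ≤ (i : ℕ) → lamF B (G i) = 0) ∧
  (∀ p ∈ U.powersetCard 2, lamF B p = 0) ∧
  (∀ p ∈ X.powersetCard 2, (∀ i, ¬ p ⊆ G i) → ¬ p ⊆ U → lamF B p = 1)

/-- Candelabra system CS(g^n : s) on `X` with stem `S` and groups `G`. -/
def IsCS (X : Finset α) (g n s : ℕ) (S : Finset α) (G : Fin n → Finset α)
    (A : Multiset (Finset α)) : Prop :=
  S.card = s ∧ S ⊆ X ∧ (∀ i, (G i).card = g ∧ G i ⊆ X) ∧
  (∀ i j, i ≠ j → Disjoint (G i) (G j)) ∧ (∀ i, Disjoint (G i) S) ∧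
  S ∪ Finset.univ.biUnion G = X ∧
  (∀ B ∈ A, B.card = 3 ∧ B ⊆ X) ∧
  (∀ T ∈ X.powersetCard 3, (∀ i, ¬ T ⊆ S ∪ G i) → lamF A T = 1) ∧
  (∀ T ∈ X.powersetCard 3, (∃ i, T ⊆ S ∪ G i) → lamF A T = 0)

/-- Partitionable candelabra system PCS(g^n : s). -/
def IsPCS (X : Finset α) (g n s : ℕ) (S : Finset α) (G : Fin n → Finset α)
    (A : Multiset (Finset α)) : Prop :=
  IsCS X g n s S G A ∧
  ∃ (Ax : α → Multiset (Finset α)) (Ai : Fin (s - 2) → Multiset (Finset α)),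
    A = (∑ p ∈ X \ S, Ax p) + ∑ i, Ai i ∧
    (∀ i : Fin n, ∀ p ∈ G i, IsGDD1u X 1 (g + s) (G i ∪ S) (Ax p)) ∧
    (∀ j, IsGDDgroups 1 G (Ai j))

/-- g-PCS_2((2ag)^n : s). -/
def IsGPCS2 (X : Finset α) (a g n s : ℕ) (S : Finset α) (G : Fin n → Finset α)
    (A : Multiset (Finset α)) : Prop :=
  IsCS X (2 * a * g) n s S G A ∧
  ∃ (P : Fin (g * n) → Multiset (Finset α)) (grp : Fin (g * n) → Fin n),
    (∑ i, P i) ≤ A ∧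
    (∀ j : Fin n, (Finset.univ.filter fun i => grp i = j).card = g) ∧
    (∀ i, IsGDD1u X 2 (2 * a * g + s) (G (grp i) ∪ S) (P i))

/-- g-PCS_2^r((2ag)^n : s). -/
def IsGPCS2r (X : Finset α) (a g n s r : ℕ) (S : Finset α) (G : Fin n → Finset α)
    (A : Multiset (Finset α)) : Prop :=
  IsCS X (2 * a * g) n s S G A ∧
  ∃ (P : Fin (g * n) → Multiset (Finset α)) (grp : Fin (g * n) → Fin n),
    (∑ i, P i) ≤ A ∧
    (∀ j : Fin n, (Finset.univ.filter fun i => grp i = j).card = g) ∧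
    (∀ i, IsGDD1u X 2 (2 * a * g + s) (G (grp i) ∪ S) (P i)) ∧
    ∃ (i : Fin (g * n)) (N : Multiset (Finset α))
      (Gs : Fin (r + (a * g * (n - 1) - r)) → Finset α),
      N ≤ P i ∧ IsNGDD X r (a * g * (n - 1) - r) (2 * a * g + s) Gs (G (grp i) ∪ S) N

/-- GDD(3,3,·) of type `g^k` on `X` with groups `H`. -/
def IsGDD3On (X : Finset α) (g : ℕ) {k : ℕ} (H : Fin k → Finset α)
    (A : Multiset (Finset α)) : Prop :=
  (∀ i, (H i).card = g ∧ H i ⊆ X) ∧ (∀ i j, i ≠ j → Disjoint (H i) (H j)) ∧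
  Finset.univ.biUnion H = X ∧
  (∀ B ∈ A, B.card = 3 ∧ B ⊆ X ∧ ∀ i, (B ∩ H i).card ≤ 1) ∧
  (∀ T ∈ X.powersetCard 3, (∀ i, (T ∩ H i).card ≤ 1) → lamF A T = 1)

/-- `B` is a GDD_mu(2,3,·) on the points not in the omitted group `H o`,
with group set `{H i : i ≠ o}`. -/
def IsGDDOmit (mu : ℕ) {k : ℕ} (H : Fin k → Finset α) (o : Fin k)
    (B : Multiset (Finset α)) : Prop :=
  (∀ A ∈ B, A.card = 3 ∧ Disjoint A (H o) ∧ ∀ i, (A ∩ H i).card ≤ 1) ∧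
  ∀ x y : α, x ≠ y →
    (∃ i j, i ≠ j ∧ i ≠ o ∧ j ≠ o ∧ x ∈ H i ∧ y ∈ H j) → lamF B {x, y} = mu

/-- PGDD_2((2g)^{n+1}). -/
def IsPGDD2 (g n : ℕ) (H : Fin (n + 1) → Finset (Fin (2 * g * (n + 1))))
    (A : Multiset (Finset (Fin (2 * g * (n + 1))))) : Prop :=
  IsGDD3On Finset.univ (2 * g) H A ∧
  ∃ (i0 : Fin (n + 1))
    (P : Fin (g * n + 2 * g) → Multiset (Finset (Fin (2 * g * (n + 1)))))
    (f : Fin (g * n + 2 * g) → Fin (n + 1)),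
    A = ∑ i, P i ∧
    (∀ j, j ≠ i0 → (Finset.univ.filter fun i => f i = j).card = g) ∧
    (∀ i, f i ≠ i0 → IsGDDOmit 2 H (f i) (P i)) ∧
    (∀ i, f i = i0 → IsGDDOmit 1 H i0 (P i))

/-- 1-FG(3,(K1,KT),n) of type 1^n. -/
def Is1FG (n : ℕ) (K1 KT : Set ℕ) (A1 AT : Multiset (Finset (Fin n))) : Prop :=
  (∀ B ∈ A1, B.card ∈ K1) ∧ (∀ B ∈ AT, B.card ∈ KT) ∧
  (∀ p ∈ (Finset.univ : Finset (Fin n)).powersetCard 2, lamF A1 p = 1) ∧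
  (∀ T ∈ (Finset.univ : Finset (Fin n)).powersetCard 3, lamF (A1 + AT) T = 1)

/-- PICS_2^r((2g)^3 : 0). -/
def IsPICS2 (g r : ℕ) (G : Fin 3 → Finset (Fin (6 * g)))
    (A : Multiset (Finset (Fin (6 * g)))) : Prop :=
  IsCS Finset.univ (2 * g) 3 0 (∅ : Finset (Fin (6 * g))) G A ∧
  ∃ P : Fin (4 * g - 2) → Multiset (Finset (Fin (6 * g))),
    A = ∑ i, P i ∧
    (∀ i : Fin (4 * g - 2), (i : ℕ) < 2 * g → IsSDesignOn Finset.univ 2 (P i)) ∧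
    (∃ i : Fin (4 * g - 2), (i : ℕ) < 2 * g ∧
      ∃ (N : Multiset (Finset (Fin (6 * g))))
        (Gs : Fin (r + (3 * g - r)) → Finset (Fin (6 * g))),
        N ≤ P i ∧ IsNGDD Finset.univ r (3 * g - r) 0 Gs ∅ N) ∧
    (∀ i : Fin (4 * g - 2), 2 * g ≤ (i : ℕ) → IsGDDgroups 1 G (P i))

/-- Number of ordered pairs of blocks of `F` whose intersection has exactly
`j` points. -/
def interCount (F : Multiset (Finset α)) (j : ℕ) : ℕ :=
  Multiset.card
    ((F.bind fun A => F.map fun B => (A, B)).filter fun p => (p.1 ∩ p.2).card = j)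

/-- The polynomial `P(F, x) = Σ_{j=0}^{3} v_j x^j`. -/
noncomputable def Pval (F : Multiset (Finset α)) (x : ℝ) : ℝ :=
  ∑ j ∈ Finset.range 4, (interCount F j : ℝ) * x ^ j

/-- Optimal data placement for triple replication. -/
def IsOptimalDP (v b : ℕ) (F : Multiset (Finset (Fin v))) : Prop :=
  IsTSOn Finset.univ v b F ∧
  ∀ F' : Multiset (Finset (Fin v)), IsTSOn Finset.univ v b F' →
    ∀ x : ℝ, 1 ≤ x → Pval F x ≤ Pval F' x

section NWBHelpers

variable {β : Type*} [DecidableEq β]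
set_option linter.unusedSectionVars false

lemma lamF_add (F G : Multiset (Finset β)) (T : Finset β) :
    lamF (F + G) T = lamF F T + lamF G T := by
  simp [lamF, Multiset.filter_add]

lemma forall_of_filter {L : List (Finset β)} {P : Finset β → Prop} [DecidablePred P]
    (h : L.filter (fun a => decide (P a)) = L) : ∀ a ∈ L, P a := by
  intro a ha
  exact of_decide_eq_true (List.filter_eq_self.mp h a ha)

lemma threeBal_of_nodup (X : Finset β) (F : Multiset (Finset β)) (h : F.Nodup) :
    ThreeBalancedOn X F := by
  intro T₁ _ T₂ _
  have := Multiset.nodup_iff_count_le_one.mp h T₁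
  omega

lemma lamF_complete [Fintype β] (p : Finset β) (hp : p.card = 2) :
    lamF ((Finset.univ : Finset β).powersetCard 3).val p = Fintype.card β - 2 := by
  classical
  have h1 : lamF ((Finset.univ : Finset β).powersetCard 3).val p
      = (Finset.filter (fun B => p ⊆ B) ((Finset.univ : Finset β).powersetCard 3)).card := by
    rw [lamF, ← Finset.filter_val]
    rfl
  have hb : ((Finset.univ : Finset β) \ p).card
      = (Finset.filter (fun B => p ⊆ B) ((Finset.univ : Finset β).powersetCard 3)).card := by
    apply Finset.card_bij (fun x _ => insert x p)
    · intro x hx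
      have hxp : x ∉ p := (Finset.mem_sdiff.mp hx).2
      rw [Finset.mem_filter, Finset.mem_powersetCard]
      exact ⟨⟨Finset.subset_univ _, by rw [Finset.card_insert_of_notMem hxp, hp]⟩,
        Finset.subset_insert x p⟩
    · intro x hx y hy hxy
      have hxp : x ∉ p := (Finset.mem_sdiff.mp hx).2
      have : x ∈ insert y p := hxy ▸ Finset.mem_insert_self x p
      rcases Finset.mem_insert.mp this with h | h
      · exact h
      · exact absurd h hxp
    · intro B hB
      rw [Finset.mem_filter, Finset.mem_powersetCard] at hB
      obtain ⟨⟨_, hB3⟩, hpB⟩ := hB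
      have hcs : (B \ p).card = 1 := by rw [Finset.card_sdiff_of_subset hpB, hB3, hp]
      obtain ⟨x, hx⟩ := Finset.card_eq_one.mp hcs
      have hxB : x ∈ B \ p := hx ▸ Finset.mem_singleton_self x
      rw [Finset.mem_sdiff] at hxB
      refine ⟨x, Finset.mem_sdiff.mpr ⟨Finset.mem_univ x, hxB.2⟩, ?_⟩
      apply Finset.eq_of_subset_of_card_le
      · exact Finset.insert_subset hxB.1 hpB
      · rw [Finset.card_insert_of_notMem hxB.2, hp, hB3]
  rw [h1, ← hb, Finset.card_sdiff_of_subset (Finset.subset_univ p), Finset.card_univ, hp]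

end NWBHelpers

section NWBConstruction
set_option maxRecDepth 100000
set_option maxHeartbeats 1000000 in
def Pc5_0 : List (Finset (Fin 5)) := [{0,1},{0,2},{0,3},{0,4},{1,2},{1,3},{1,4},{2,3},{2,4},{3,4}]

lemma hPall5 : ((Finset.univ : Finset (Fin 5)).powersetCard 2).val = ↑(Pc5_0) := by decide

lemma pairs_forall5 {P : Finset (Fin 5) → Prop} [DecidablePred P]
    (h0 : ∀ p ∈ Pc5_0, P p) :
    ∀ p ∈ (Finset.univ : Finset (Fin 5)).powersetCard 2, P p := by
  intro p hp
  have hm : p ∈ ((Finset.univ : Finset (Fin 5)).powersetCard 2).val := Finset.mem_def.mp hp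
  rw [hPall5] at hm
  have hmm : p ∈ (Pc5_0) := Multiset.mem_coe.mp hm
  exact h0 p hmm

lemma dlev_eq5 (F : Multiset (Finset (Fin 5))) (l : ℕ) (i : ℤ)
    (R0 : List (Finset (Fin 5)))
    (E : Finset (Finset (Fin 5)))
    (h0 : Pc5_0.filter (fun p => decide ((lamF F p : ℤ) = (l : ℤ) + i)) = R0)
    (hE : E.val = ↑(R0)) :
    Dlev Finset.univ F l i = E := by
  apply Finset.val_inj.mp
  rw [Dlev, Finset.filter_val, hPall5, hE, Multiset.filter_coe]
  skip
  rw [h0]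

lemma shiftcore5 (k d : ℕ) {b : ℕ} {F D : Multiset (Finset (Fin 5))}
    (h : IsNWBTSOn (Finset.univ : Finset (Fin 5)) 5 b F)
    (hDcard : Multiset.card D = k)
    (hDblocks : ∀ B ∈ D, B.card = 3 ∧ B ⊆ (Finset.univ : Finset (Fin 5)))
    (hDdeg : ∀ p ∈ (Finset.univ : Finset (Fin 5)).powersetCard 2, lamF D p = d)
    (hk : d * 20 = 6 * k) (hd : d % 3 = 0)
    (hbal : ThreeBalancedOn (Finset.univ : Finset (Fin 5)) (F + D)) :
    IsNWBTSOn (Finset.univ : Finset (Fin 5)) 5 (b + k) (F + D) := by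
  obtain ⟨⟨hX, hcard, hblocks⟩, -, l, e, hl, ⟨hassoc, hlo, hhi⟩, hrange, hbr⟩ := h
  rcases hbr with ⟨hc1, hshape⟩ | ⟨hc2, -⟩
  swap
  · exact absurd hc2.1 (by norm_num)
  have hdeg : ∀ p ∈ (Finset.univ : Finset (Fin 5)).powersetCard 2,
      lamF (F + D) p = lamF F p + d := by
    intro p hp; rw [lamF_add, hDdeg p hp]
  have hDlev : ∀ i : ℤ, Dlev Finset.univ (F + D) (l + d) i = Dlev Finset.univ F l i := by
    intro i
    unfold Dlev
    apply Finset.filter_congr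
    intro p hp
    rw [hdeg p hp]
    push_cast
    omega
  refine ⟨⟨hX, ?_, ?_⟩, hbal, l + d, e, by omega, ⟨?_, hlo, hhi⟩, ?_, Or.inl ⟨?_, ?_⟩⟩
  · rw [Multiset.card_add, hcard, hDcard]
  · intro B hB
    rcases Multiset.mem_add.mp hB with hB | hB
    exacts [hblocks B hB, hDblocks B hB]
  · push_cast at hassoc ⊢
    omega
  · intro p hp
    rw [hdeg p hp]
    have := hrange p hp
    push_cast at this ⊢
    omega
  · obtain ⟨hv3, l₀, hl₀, hmods, hb⟩ := hc1
    refine ⟨hv3, l₀ + d, by omega, ?_, ?_⟩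
    · rcases hmods with ⟨hv6, hm⟩ | ⟨hv6, -⟩
      · exact Or.inl ⟨hv6, by omega⟩
      · exact absurd hv6 (by norm_num)
    · rcases hb with hb | hb
      · exact Or.inl (by omega)
      · exact Or.inr (by omega)
  · have hsh := hshape
    unfold C1ShapeOn at hsh ⊢
    rw [hDlev 1, hDlev (-1)]
    exact hsh

def Kc5 : Multiset (Finset (Fin 5)) := ((Finset.univ : Finset (Fin 5)).powersetCard 3).val

lemma shiftK5 {b : ℕ} {F : Multiset (Finset (Fin 5))}
    (h : IsNWBTSOn (Finset.univ : Finset (Fin 5)) 5 b F) :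
    IsNWBTSOn (Finset.univ : Finset (Fin 5)) 5 (b + 10) (F + Kc5) := by
  have h3 := h.2.1
  refine shiftcore5 10 3 h ?_ ?_ ?_ (by norm_num) (by norm_num) ?_
  · show ((Finset.univ : Finset (Fin 5)).powersetCard 3).card = _
    rw [Finset.card_powersetCard, Finset.card_univ, Fintype.card_fin]
    decide
  · intro B hB
    have hB' := Finset.mem_powersetCard.mp (Finset.mem_def.mpr hB)
    exact ⟨hB'.2, hB'.1⟩
  · intro p hp
    rw [Kc5, lamF_complete p (Finset.mem_powersetCard.mp hp).2, Fintype.card_fin]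
  · intro T₁ h1 T₂ h2
    show Multiset.count T₁ _ ≤ Multiset.count T₂ _ + 1
    rw [Multiset.count_add, Multiset.count_add]
    have c1 : Multiset.count T₁ Kc5 = 1 :=
      Multiset.count_eq_one_of_mem (Finset.nodup _) (Finset.mem_def.mp h1)
    have c2 : Multiset.count T₂ Kc5 = 1 :=
      Multiset.count_eq_one_of_mem (Finset.nodup _) (Finset.mem_def.mp h2)
    have := h3 T₁ h1 T₂ h2
    omega

lemma chain5 (r : ℕ) (hr : ∃ F, IsNWBTSOn (Finset.univ : Finset (Fin 5)) 5 r F) :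
    ∀ q : ℕ, ∃ F, IsNWBTSOn (Finset.univ : Finset (Fin 5)) 5 (r + 10 * q) F := by
  intro q
  induction q with
  | zero => simpa using hr
  | succ n ih =>
      obtain ⟨F, hF⟩ := ih
      refine ⟨F + Kc5, ?_⟩
      have hh := shiftK5 hF
      have heq : r + 10 * (n + 1) = r + 10 * n + 10 := by ring
      rw [heq]
      exact hh

def Pc11_0 : List (Finset (Fin 11)) := [{0,1},{0,2},{0,3},{0,4},{0,5},{0,6},{0,7},{0,8},{0,9},{0,10},{1,2}]
def Pc11_1 : List (Finset (Fin 11)) := [{1,3},{1,4},{1,5},{1,6},{1,7},{1,8},{1,9},{1,10},{2,3},{2,4},{2,5}]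
def Pc11_2 : List (Finset (Fin 11)) := [{2,6},{2,7},{2,8},{2,9},{2,10},{3,4},{3,5},{3,6},{3,7},{3,8},{3,9}]
def Pc11_3 : List (Finset (Fin 11)) := [{3,10},{4,5},{4,6},{4,7},{4,8},{4,9},{4,10},{5,6},{5,7},{5,8},{5,9}]
def Pc11_4 : List (Finset (Fin 11)) := [{5,10},{6,7},{6,8},{6,9},{6,10},{7,8},{7,9},{7,10},{8,9},{8,10},{9,10}]

lemma hPall11 : ((Finset.univ : Finset (Fin 11)).powersetCard 2).val = ↑(Pc11_0 ++ Pc11_1 ++ Pc11_2 ++ Pc11_3 ++ Pc11_4) := by decide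

lemma pairs_forall11 {P : Finset (Fin 11) → Prop} [DecidablePred P]
    (h0 : ∀ p ∈ Pc11_0, P p) (h1 : ∀ p ∈ Pc11_1, P p) (h2 : ∀ p ∈ Pc11_2, P p) (h3 : ∀ p ∈ Pc11_3, P p) (h4 : ∀ p ∈ Pc11_4, P p) :
    ∀ p ∈ (Finset.univ : Finset (Fin 11)).powersetCard 2, P p := by
  intro p hp
  have hm : p ∈ ((Finset.univ : Finset (Fin 11)).powersetCard 2).val := Finset.mem_def.mp hp
  rw [hPall11] at hm
  have hmm : p ∈ (Pc11_0 ++ Pc11_1 ++ Pc11_2 ++ Pc11_3 ++ Pc11_4) := Multiset.mem_coe.mp hm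
  simp only [List.mem_append] at hmm
  rcases hmm with ((((h|h)|h)|h)|h)
  exacts [h0 p h, h1 p h, h2 p h, h3 p h, h4 p h]

lemma dlev_eq11 (F : Multiset (Finset (Fin 11))) (l : ℕ) (i : ℤ)
    (R0 R1 R2 R3 R4 : List (Finset (Fin 11)))
    (E : Finset (Finset (Fin 11)))
    (h0 : Pc11_0.filter (fun p => decide ((lamF F p : ℤ) = (l : ℤ) + i)) = R0) (h1 : Pc11_1.filter (fun p => decide ((lamF F p : ℤ) = (l : ℤ) + i)) = R1) (h2 : Pc11_2.filter (fun p => decide ((lamF F p : ℤ) = (l : ℤ) + i)) = R2) (h3 : Pc11_3.filter (fun p => decide ((lamF F p : ℤ) = (l : ℤ) + i)) = R3) (h4 : Pc11_4.filter (fun p => decide ((lamF F p : ℤ) = (l : ℤ) + i)) = R4)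
    (hE : E.val = ↑(R0 ++ R1 ++ R2 ++ R3 ++ R4)) :
    Dlev Finset.univ F l i = E := by
  apply Finset.val_inj.mp
  rw [Dlev, Finset.filter_val, hPall11, hE, Multiset.filter_coe]
  simp only [List.filter_append]
  rw [h0, h1, h2, h3, h4]

lemma shiftcore11 (k d : ℕ) {b : ℕ} {F D : Multiset (Finset (Fin 11))}
    (h : IsNWBTSOn (Finset.univ : Finset (Fin 11)) 11 b F)
    (hDcard : Multiset.card D = k)
    (hDblocks : ∀ B ∈ D, B.card = 3 ∧ B ⊆ (Finset.univ : Finset (Fin 11)))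
    (hDdeg : ∀ p ∈ (Finset.univ : Finset (Fin 11)).powersetCard 2, lamF D p = d)
    (hk : d * 110 = 6 * k) (hd : d % 3 = 0)
    (hbal : ThreeBalancedOn (Finset.univ : Finset (Fin 11)) (F + D)) :
    IsNWBTSOn (Finset.univ : Finset (Fin 11)) 11 (b + k) (F + D) := by
  obtain ⟨⟨hX, hcard, hblocks⟩, -, l, e, hl, ⟨hassoc, hlo, hhi⟩, hrange, hbr⟩ := h
  rcases hbr with ⟨hc1, hshape⟩ | ⟨hc2, -⟩
  swap
  · exact absurd hc2.1 (by norm_num)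
  have hdeg : ∀ p ∈ (Finset.univ : Finset (Fin 11)).powersetCard 2,
      lamF (F + D) p = lamF F p + d := by
    intro p hp; rw [lamF_add, hDdeg p hp]
  have hDlev : ∀ i : ℤ, Dlev Finset.univ (F + D) (l + d) i = Dlev Finset.univ F l i := by
    intro i
    unfold Dlev
    apply Finset.filter_congr
    intro p hp
    rw [hdeg p hp]
    push_cast
    omega
  refine ⟨⟨hX, ?_, ?_⟩, hbal, l + d, e, by omega, ⟨?_, hlo, hhi⟩, ?_, Or.inl ⟨?_, ?_⟩⟩
  · rw [Multiset.card_add, hcard, hDcard]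
  · intro B hB
    rcases Multiset.mem_add.mp hB with hB | hB
    exacts [hblocks B hB, hDblocks B hB]
  · push_cast at hassoc ⊢
    omega
  · intro p hp
    rw [hdeg p hp]
    have := hrange p hp
    push_cast at this ⊢
    omega
  · obtain ⟨hv3, l₀, hl₀, hmods, hb⟩ := hc1
    refine ⟨hv3, l₀ + d, by omega, ?_, ?_⟩
    · rcases hmods with ⟨hv6, hm⟩ | ⟨hv6, -⟩
      · exact Or.inl ⟨hv6, by omega⟩
      · exact absurd hv6 (by norm_num)
    · rcases hb with hb | hb
      · exact Or.inl (by omega)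
      · exact Or.inr (by omega)
  · have hsh := hshape
    unfold C1ShapeOn at hsh ⊢
    rw [hDlev 1, hDlev (-1)]
    exact hsh

def Kc11 : Multiset (Finset (Fin 11)) := ((Finset.univ : Finset (Fin 11)).powersetCard 3).val

lemma shiftK11 {b : ℕ} {F : Multiset (Finset (Fin 11))}
    (h : IsNWBTSOn (Finset.univ : Finset (Fin 11)) 11 b F) :
    IsNWBTSOn (Finset.univ : Finset (Fin 11)) 11 (b + 165) (F + Kc11) := by
  have h3 := h.2.1
  refine shiftcore11 165 9 h ?_ ?_ ?_ (by norm_num) (by norm_num) ?_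
  · show ((Finset.univ : Finset (Fin 11)).powersetCard 3).card = _
    rw [Finset.card_powersetCard, Finset.card_univ, Fintype.card_fin]
    decide
  · intro B hB
    have hB' := Finset.mem_powersetCard.mp (Finset.mem_def.mpr hB)
    exact ⟨hB'.2, hB'.1⟩
  · intro p hp
    rw [Kc11, lamF_complete p (Finset.mem_powersetCard.mp hp).2, Fintype.card_fin]
  · intro T₁ h1 T₂ h2
    show Multiset.count T₁ _ ≤ Multiset.count T₂ _ + 1
    rw [Multiset.count_add, Multiset.count_add]
    have c1 : Multiset.count T₁ Kc11 = 1 :=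
      Multiset.count_eq_one_of_mem (Finset.nodup _) (Finset.mem_def.mp h1)
    have c2 : Multiset.count T₂ Kc11 = 1 :=
      Multiset.count_eq_one_of_mem (Finset.nodup _) (Finset.mem_def.mp h2)
    have := h3 T₁ h1 T₂ h2
    omega

lemma chain11 (r : ℕ) (hr : ∃ F, IsNWBTSOn (Finset.univ : Finset (Fin 11)) 11 r F) :
    ∀ q : ℕ, ∃ F, IsNWBTSOn (Finset.univ : Finset (Fin 11)) 11 (r + 165 * q) F := by
  intro q
  induction q with
  | zero => simpa using hr
  | succ n ih =>
      obtain ⟨F, hF⟩ := ih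
      refine ⟨F + Kc11, ?_⟩
      have hh := shiftK11 hF
      have heq : r + 165 * (n + 1) = r + 165 * n + 165 := by ring
      rw [heq]
      exact hh

def BL5_3 : List (Finset (Fin 5)) := [{0,1,2},{0,1,3},{2,3,4}]

lemma nwb5_3 : IsNWBTSOn (Finset.univ : Finset (Fin 5)) 5 3 (↑BL5_3) := by
  have hd1 : Dlev Finset.univ (↑BL5_3 : Multiset (Finset (Fin 5))) 1 1 = {({0,1} : Finset (Fin 5))} :=
    dlev_eq5 _ 1 1 [{0,1}] _ (by decide) (by decide)
  have hdm1 : Dlev Finset.univ (↑BL5_3 : Multiset (Finset (Fin 5))) 1 (-1) = {({0,4} : Finset (Fin 5)), ({1,4} : Finset (Fin 5))} :=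
    dlev_eq5 _ 1 (-1) [{0,4},{1,4}] _ (by decide) (by decide)
  refine ⟨⟨by decide, by decide, ?_⟩, threeBal_of_nodup _ _ (Multiset.coe_nodup.mpr (by decide)),
    1, -1, by norm_num, ⟨by decide, by decide, by decide⟩, ?_,
    Or.inl ⟨⟨by norm_num, 1, by norm_num, Or.inl ⟨by norm_num, by norm_num⟩, Or.inl (by norm_num)⟩, Or.inr (Or.inl ⟨rfl, ?tri, ?c1, ?c2⟩)⟩⟩
  · intro B hB
    exact forall_of_filter (P := fun A => A.card = 3 ∧ A ⊆ (Finset.univ : Finset (Fin 5))) (by decide) B (Multiset.mem_coe.mp hB)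
  · unfold PairRangeOn
    refine pairs_forall5 ?_
    all_goals exact forall_of_filter (by decide)
  case tri =>
    rw [hd1, hdm1]
    exact ⟨0, 1, 4, by decide, by decide, by decide, by decide⟩
  case c1 => rw [hd1]; decide
  case c2 => rw [hdm1]; decide

def BL5_4 : List (Finset (Fin 5)) := [{0,1,2},{1,2,3},{2,3,4},{0,3,4}]

lemma nwb5_4 : IsNWBTSOn (Finset.univ : Finset (Fin 5)) 5 4 (↑BL5_4) := by
  have hd1 : Dlev Finset.univ (↑BL5_4 : Multiset (Finset (Fin 5))) 1 1 = {({1,2} : Finset (Fin 5)), ({2,3} : Finset (Fin 5)), ({3,4} : Finset (Fin 5))} :=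
    dlev_eq5 _ 1 1 [{1,2},{2,3},{3,4}] _ (by decide) (by decide)
  have hdm1 : Dlev Finset.univ (↑BL5_4 : Multiset (Finset (Fin 5))) 1 (-1) = {({1,4} : Finset (Fin 5))} :=
    dlev_eq5 _ 1 (-1) [{1,4}] _ (by decide) (by decide)
  refine ⟨⟨by decide, by decide, ?_⟩, threeBal_of_nodup _ _ (Multiset.coe_nodup.mpr (by decide)),
    1, 2, by norm_num, ⟨by decide, by decide, by decide⟩, ?_,
    Or.inl ⟨⟨by norm_num, 1, by norm_num, Or.inl ⟨by norm_num, by norm_num⟩, Or.inr (by norm_num)⟩, Or.inr (Or.inr (Or.inl ⟨rfl, ?tri, ?c1, ?c2⟩))⟩⟩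
  · intro B hB
    exact forall_of_filter (P := fun A => A.card = 3 ∧ A ⊆ (Finset.univ : Finset (Fin 5))) (by decide) B (Multiset.mem_coe.mp hB)
  · unfold PairRangeOn
    refine pairs_forall5 ?_
    all_goals exact forall_of_filter (by decide)
  case tri =>
    rw [hd1, hdm1]
    exact ⟨1, 2, 3, 4, by decide, by decide, by decide, by decide, by decide, by decide, by decide⟩
  case c1 => rw [hd1]; decide
  case c2 => rw [hdm1]; decide

def BL5_6 : List (Finset (Fin 5)) := [{0,1,3},{0,1,4},{0,2,3},{0,2,4},{1,2,4},{1,3,4}]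

lemma nwb5_6 : IsNWBTSOn (Finset.univ : Finset (Fin 5)) 5 6 (↑BL5_6) := by
  have hd1 : Dlev Finset.univ (↑BL5_6 : Multiset (Finset (Fin 5))) 2 1 = {({1,4} : Finset (Fin 5))} :=
    dlev_eq5 _ 2 1 [{1,4}] _ (by decide) (by decide)
  have hdm1 : Dlev Finset.univ (↑BL5_6 : Multiset (Finset (Fin 5))) 2 (-1) = {({1,2} : Finset (Fin 5)), ({2,3} : Finset (Fin 5)), ({3,4} : Finset (Fin 5))} :=
    dlev_eq5 _ 2 (-1) [{1,2},{2,3},{3,4}] _ (by decide) (by decide)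
  refine ⟨⟨by decide, by decide, ?_⟩, threeBal_of_nodup _ _ (Multiset.coe_nodup.mpr (by decide)),
    2, -2, by norm_num, ⟨by decide, by decide, by decide⟩, ?_,
    Or.inl ⟨⟨by norm_num, 2, by norm_num, Or.inl ⟨by norm_num, by norm_num⟩, Or.inl (by norm_num)⟩, Or.inr (Or.inr (Or.inr ⟨rfl, ?tri, ?c1, ?c2⟩))⟩⟩
  · intro B hB
    exact forall_of_filter (P := fun A => A.card = 3 ∧ A ⊆ (Finset.univ : Finset (Fin 5))) (by decide) B (Multiset.mem_coe.mp hB)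
  · unfold PairRangeOn
    refine pairs_forall5 ?_
    all_goals exact forall_of_filter (by decide)
  case tri =>
    rw [hd1, hdm1]
    exact ⟨1, 2, 3, 4, by decide, by decide, by decide, by decide, by decide, by decide, by decide⟩
  case c1 => rw [hd1]; decide
  case c2 => rw [hdm1]; decide

def BL5_7 : List (Finset (Fin 5)) := [{0,1,4},{0,2,3},{0,2,4},{0,3,4},{1,2,3},{1,2,4},{1,3,4}]

lemma nwb5_7 : IsNWBTSOn (Finset.univ : Finset (Fin 5)) 5 7 (↑BL5_7) := by
  have hd1 : Dlev Finset.univ (↑BL5_7 : Multiset (Finset (Fin 5))) 2 1 = {({0,4} : Finset (Fin 5)), ({1,4} : Finset (Fin 5))} :=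
    dlev_eq5 _ 2 1 [{0,4},{1,4}] _ (by decide) (by decide)
  have hdm1 : Dlev Finset.univ (↑BL5_7 : Multiset (Finset (Fin 5))) 2 (-1) = {({0,1} : Finset (Fin 5))} :=
    dlev_eq5 _ 2 (-1) [{0,1}] _ (by decide) (by decide)
  refine ⟨⟨by decide, by decide, ?_⟩, threeBal_of_nodup _ _ (Multiset.coe_nodup.mpr (by decide)),
    2, 1, by norm_num, ⟨by decide, by decide, by decide⟩, ?_,
    Or.inl ⟨⟨by norm_num, 2, by norm_num, Or.inl ⟨by norm_num, by norm_num⟩, Or.inr (by norm_num)⟩, Or.inl ⟨rfl, ?tri, ?c1, ?c2⟩⟩⟩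
  · intro B hB
    exact forall_of_filter (P := fun A => A.card = 3 ∧ A ⊆ (Finset.univ : Finset (Fin 5))) (by decide) B (Multiset.mem_coe.mp hB)
  · unfold PairRangeOn
    refine pairs_forall5 ?_
    all_goals exact forall_of_filter (by decide)
  case tri =>
    rw [hd1, hdm1]
    exact ⟨0, 1, 4, by decide, by decide, by decide, by decide⟩
  case c1 => rw [hd1]; decide
  case c2 => rw [hdm1]; decide

def BL11_18 : List (Finset (Fin 11)) := [{0,1,6},{0,1,9},{0,3,7},{0,4,8},{0,5,10},{1,3,4},{1,5,7},{1,8,10},{2,3,8},{2,4,5},{2,6,9},{2,7,10},{3,5,6},{3,9,10},{4,6,10},{4,7,9},{5,8,9},{6,7,8}]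

lemma nwb11_18 : IsNWBTSOn (Finset.univ : Finset (Fin 11)) 11 18 (↑BL11_18) := by
  have hd1 : Dlev Finset.univ (↑BL11_18 : Multiset (Finset (Fin 11))) 1 1 = {({0,1} : Finset (Fin 11))} :=
    dlev_eq11 _ 1 1 [{0,1}] [] [] [] [] _ (by decide) (by decide) (by decide) (by decide) (by decide) (by decide)
  have hdm1 : Dlev Finset.univ (↑BL11_18 : Multiset (Finset (Fin 11))) 1 (-1) = {({0,2} : Finset (Fin 11)), ({1,2} : Finset (Fin 11))} :=
    dlev_eq11 _ 1 (-1) [{0,2},{1,2}] [] [] [] [] _ (by decide) (by decide) (by decide) (by decide) (by decide) (by decide)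
  refine ⟨⟨by decide, by decide, ?_⟩, threeBal_of_nodup _ _ (Multiset.coe_nodup.mpr (by decide)),
    1, -1, by norm_num, ⟨by decide, by decide, by decide⟩, ?_,
    Or.inl ⟨⟨by norm_num, 1, by norm_num, Or.inl ⟨by norm_num, by norm_num⟩, Or.inl (by norm_num)⟩, Or.inr (Or.inl ⟨rfl, ?tri, ?c1, ?c2⟩)⟩⟩
  · intro B hB
    exact forall_of_filter (P := fun A => A.card = 3 ∧ A ⊆ (Finset.univ : Finset (Fin 11))) (by decide) B (Multiset.mem_coe.mp hB)
  · unfold PairRangeOn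
    refine pairs_forall11 ?_ ?_ ?_ ?_ ?_
    all_goals exact forall_of_filter (by decide)
  case tri =>
    rw [hd1, hdm1]
    exact ⟨0, 1, 2, by decide, by decide, by decide, by decide⟩
  case c1 => rw [hd1]; decide
  case c2 => rw [hdm1]; decide

def DA11_18 : List (Finset (Fin 11)) := [{0,1,2},{0,1,5},{0,1,8},{0,2,6},{0,2,10},{0,3,6},{0,3,8},{0,3,9},{0,4,7},{0,4,9},{0,4,10},{0,5,6},{0,5,9},{0,7,8},{0,7,10},{1,2,3},{1,2,9},{1,3,6},{1,3,8},{1,4,5},{1,4,7},{1,4,10},{1,5,10},{1,6,7},{1,6,9},{1,7,10},{1,8,9},{2,3,7},{2,3,10},{2,4,6},{2,4,8},{2,4,9},{2,5,7},{2,5,8},{2,5,9},{2,6,7},{2,8,10},{3,4,5},{3,4,6},{3,4,10},{3,5,7},{3,5,10},{3,7,9},{3,8,9},{4,5,9},{4,6,8},{4,7,8},{5,6,8},{5,6,10},{5,7,8},{6,7,9},{6,8,10},{6,9,10},{7,9,10},{8,9,10}]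
def DB11_18 : List (Finset (Fin 11)) := [{0,1,3},{0,1,4},{0,1,10},{0,2,4},{0,2,5},{0,2,7},{0,3,4},{0,3,5},{0,5,8},{0,6,7},{0,6,8},{0,6,9},{0,7,9},{0,8,10},{0,9,10},{1,2,5},{1,2,7},{1,2,8},{1,3,9},{1,3,10},{1,4,6},{1,4,9},{1,5,6},{1,5,8},{1,6,10},{1,7,8},{1,7,9},{2,3,5},{2,3,6},{2,3,9},{2,4,7},{2,4,10},{2,6,8},{2,6,10},{2,8,9},{2,9,10},{3,4,7},{3,4,8},{3,5,9},{3,6,7},{3,6,10},{3,7,8},{3,8,10},{4,5,6},{4,5,8},{4,5,10},{4,6,9},{4,7,10},{4,8,9},{5,6,7},{5,7,9},{5,7,10},{5,9,10},{6,8,9},{7,8,10}]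

lemma deg_DA11_18 : ∀ p ∈ (Finset.univ : Finset (Fin 11)).powersetCard 2, lamF (↑DA11_18 : Multiset (Finset (Fin 11))) p = 3 := by
  refine pairs_forall11 ?_ ?_ ?_ ?_ ?_
  all_goals exact forall_of_filter (by decide)


lemma deg_DB11_18 : ∀ p ∈ (Finset.univ : Finset (Fin 11)).powersetCard 2, lamF (↑DB11_18 : Multiset (Finset (Fin 11))) p = 3 := by
  refine pairs_forall11 ?_ ?_ ?_ ?_ ?_
  all_goals exact forall_of_filter (by decide)


lemma nwb11_73 : IsNWBTSOn (Finset.univ : Finset (Fin 11)) 11 73 ((↑BL11_18 : Multiset (Finset (Fin 11))) + (↑DA11_18 : Multiset (Finset (Fin 11)))) := by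
  have hdj0 : ∀ a ∈ BL11_18, a ∉ DA11_18 := forall_of_filter (by decide)
  have hnd : Multiset.Nodup ((↑BL11_18 : Multiset (Finset (Fin 11))) + (↑DA11_18 : Multiset (Finset (Fin 11)))) := by
    rw [Multiset.coe_add]
    refine Multiset.coe_nodup.mpr (List.nodup_append.mpr ⟨by decide, by decide, ?_⟩)
    intro a ha b hb2 hab
    exact hdj0 a ha (by subst hab; exact hb2)
  have hh := shiftcore11 55 3 nwb11_18 (by decide) (fun B hB => forall_of_filter (P := fun A => A.card = 3 ∧ A ⊆ (Finset.univ : Finset (Fin 11))) (by decide) B (Multiset.mem_coe.mp hB)) deg_DA11_18 (by norm_num) (by norm_num) (threeBal_of_nodup _ _ hnd)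
  rw [show (73 : ℕ) = 18 + 55 from by norm_num]
  exact hh


lemma nwb11_128 : IsNWBTSOn (Finset.univ : Finset (Fin 11)) 11 128 (((↑BL11_18 : Multiset (Finset (Fin 11))) + (↑DA11_18 : Multiset (Finset (Fin 11)))) + (↑DB11_18 : Multiset (Finset (Fin 11)))) := by
  have hdj0 : ∀ a ∈ BL11_18, a ∉ DB11_18 := forall_of_filter (by decide)
  have hdj1 : ∀ a ∈ DA11_18, a ∉ DB11_18 := forall_of_filter (by decide)
  have hnd : Multiset.Nodup (((↑BL11_18 : Multiset (Finset (Fin 11))) + (↑DA11_18 : Multiset (Finset (Fin 11)))) + (↑DB11_18 : Multiset (Finset (Fin 11)))) := by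
    rw [Multiset.coe_add, Multiset.coe_add]
    refine Multiset.coe_nodup.mpr (List.nodup_append.mpr ⟨by decide, by decide, ?_⟩)
    intro a ha b hb2 hab
    rcases List.mem_append.mp ha with ha | ha
    · exact hdj0 a ha (by subst hab; exact hb2)
    · exact hdj1 a ha (by subst hab; exact hb2)
  have hh := shiftcore11 55 3 nwb11_73 (by decide) (fun B hB => forall_of_filter (P := fun A => A.card = 3 ∧ A ⊆ (Finset.univ : Finset (Fin 11))) (by decide) B (Multiset.mem_coe.mp hB)) deg_DB11_18 (by norm_num) (by norm_num) (threeBal_of_nodup _ _ hnd)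
  rw [show (128 : ℕ) = 73 + 55 from by norm_num]
  exact hh

def BL11_19 : List (Finset (Fin 11)) := [{0,1,9},{0,1,10},{0,2,4},{0,5,7},{0,6,8},{1,2,3},{1,2,6},{1,4,7},{1,5,8},{2,3,5},{2,7,9},{2,8,10},{3,4,6},{3,7,8},{3,9,10},{4,5,10},{4,8,9},{5,6,9},{6,7,10}]

lemma nwb11_19 : IsNWBTSOn (Finset.univ : Finset (Fin 11)) 11 19 (↑BL11_19) := by
  have hd1 : Dlev Finset.univ (↑BL11_19 : Multiset (Finset (Fin 11))) 1 1 = {({0,1} : Finset (Fin 11)), ({1,2} : Finset (Fin 11)), ({2,3} : Finset (Fin 11))} :=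
    dlev_eq11 _ 1 1 [{0,1},{1,2}] [{2,3}] [] [] [] _ (by decide) (by decide) (by decide) (by decide) (by decide) (by decide)
  have hdm1 : Dlev Finset.univ (↑BL11_19 : Multiset (Finset (Fin 11))) 1 (-1) = {({0,3} : Finset (Fin 11))} :=
    dlev_eq11 _ 1 (-1) [{0,3}] [] [] [] [] _ (by decide) (by decide) (by decide) (by decide) (by decide) (by decide)
  refine ⟨⟨by decide, by decide, ?_⟩, threeBal_of_nodup _ _ (Multiset.coe_nodup.mpr (by decide)),
    1, 2, by norm_num, ⟨by decide, by decide, by decide⟩, ?_,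
    Or.inl ⟨⟨by norm_num, 1, by norm_num, Or.inl ⟨by norm_num, by norm_num⟩, Or.inr (by norm_num)⟩, Or.inr (Or.inr (Or.inl ⟨rfl, ?tri, ?c1, ?c2⟩))⟩⟩
  · intro B hB
    exact forall_of_filter (P := fun A => A.card = 3 ∧ A ⊆ (Finset.univ : Finset (Fin 11))) (by decide) B (Multiset.mem_coe.mp hB)
  · unfold PairRangeOn
    refine pairs_forall11 ?_ ?_ ?_ ?_ ?_
    all_goals exact forall_of_filter (by decide)
  case tri =>
    rw [hd1, hdm1]
    exact ⟨0, 1, 2, 3, by decide, by decide, by decide, by decide, by decide, by decide, by decide⟩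
  case c1 => rw [hd1]; decide
  case c2 => rw [hdm1]; decide

def DA11_19 : List (Finset (Fin 11)) := [{0,1,4},{0,1,5},{0,1,8},{0,2,3},{0,2,7},{0,2,9},{0,3,5},{0,3,6},{0,4,5},{0,4,9},{0,6,9},{0,6,10},{0,7,8},{0,7,10},{0,8,10},{1,2,4},{1,2,8},{1,2,10},{1,3,4},{1,3,6},{1,3,10},{1,5,6},{1,5,7},{1,6,9},{1,7,9},{1,7,10},{1,8,9},{2,3,7},{2,3,9},{2,4,7},{2,4,10},{2,5,6},{2,5,8},{2,5,9},{2,6,8},{2,6,10},{3,4,8},{3,4,10},{3,5,8},{3,5,10},{3,6,7},{3,7,9},{3,8,9},{4,5,7},{4,5,8},{4,6,7},{4,6,8},{4,6,9},{4,9,10},{5,6,10},{5,7,9},{5,9,10},{6,7,8},{7,8,10},{8,9,10}]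
def DB11_19 : List (Finset (Fin 11)) := [{0,1,2},{0,1,3},{0,1,6},{0,2,5},{0,2,8},{0,3,7},{0,3,9},{0,4,7},{0,4,8},{0,4,10},{0,5,6},{0,5,10},{0,6,7},{0,8,9},{0,9,10},{1,2,7},{1,2,9},{1,3,5},{1,3,7},{1,4,5},{1,4,6},{1,4,8},{1,5,9},{1,6,10},{1,7,8},{1,8,10},{1,9,10},{2,3,6},{2,3,8},{2,3,10},{2,4,6},{2,4,8},{2,4,9},{2,5,7},{2,5,10},{2,6,9},{2,7,10},{3,4,5},{3,4,7},{3,4,9},{3,5,9},{3,6,8},{3,6,10},{3,8,10},{4,5,9},{4,6,10},{4,7,10},{5,6,7},{5,6,8},{5,7,8},{5,8,10},{6,7,9},{6,8,9},{7,8,9},{7,9,10}]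

lemma deg_DA11_19 : ∀ p ∈ (Finset.univ : Finset (Fin 11)).powersetCard 2, lamF (↑DA11_19 : Multiset (Finset (Fin 11))) p = 3 := by
  refine pairs_forall11 ?_ ?_ ?_ ?_ ?_
  all_goals exact forall_of_filter (by decide)


lemma deg_DB11_19 : ∀ p ∈ (Finset.univ : Finset (Fin 11)).powersetCard 2, lamF (↑DB11_19 : Multiset (Finset (Fin 11))) p = 3 := by
  refine pairs_forall11 ?_ ?_ ?_ ?_ ?_
  all_goals exact forall_of_filter (by decide)


lemma nwb11_74 : IsNWBTSOn (Finset.univ : Finset (Fin 11)) 11 74 ((↑BL11_19 : Multiset (Finset (Fin 11))) + (↑DA11_19 : Multiset (Finset (Fin 11)))) := by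
  have hdj0 : ∀ a ∈ BL11_19, a ∉ DA11_19 := forall_of_filter (by decide)
  have hnd : Multiset.Nodup ((↑BL11_19 : Multiset (Finset (Fin 11))) + (↑DA11_19 : Multiset (Finset (Fin 11)))) := by
    rw [Multiset.coe_add]
    refine Multiset.coe_nodup.mpr (List.nodup_append.mpr ⟨by decide, by decide, ?_⟩)
    intro a ha b hb2 hab
    exact hdj0 a ha (by subst hab; exact hb2)
  have hh := shiftcore11 55 3 nwb11_19 (by decide) (fun B hB => forall_of_filter (P := fun A => A.card = 3 ∧ A ⊆ (Finset.univ : Finset (Fin 11))) (by decide) B (Multiset.mem_coe.mp hB)) deg_DA11_19 (by norm_num) (by norm_num) (threeBal_of_nodup _ _ hnd)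
  rw [show (74 : ℕ) = 19 + 55 from by norm_num]
  exact hh


lemma nwb11_129 : IsNWBTSOn (Finset.univ : Finset (Fin 11)) 11 129 (((↑BL11_19 : Multiset (Finset (Fin 11))) + (↑DA11_19 : Multiset (Finset (Fin 11)))) + (↑DB11_19 : Multiset (Finset (Fin 11)))) := by
  have hdj0 : ∀ a ∈ BL11_19, a ∉ DB11_19 := forall_of_filter (by decide)
  have hdj1 : ∀ a ∈ DA11_19, a ∉ DB11_19 := forall_of_filter (by decide)
  have hnd : Multiset.Nodup (((↑BL11_19 : Multiset (Finset (Fin 11))) + (↑DA11_19 : Multiset (Finset (Fin 11)))) + (↑DB11_19 : Multiset (Finset (Fin 11)))) := by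
    rw [Multiset.coe_add, Multiset.coe_add]
    refine Multiset.coe_nodup.mpr (List.nodup_append.mpr ⟨by decide, by decide, ?_⟩)
    intro a ha b hb2 hab
    rcases List.mem_append.mp ha with ha | ha
    · exact hdj0 a ha (by subst hab; exact hb2)
    · exact hdj1 a ha (by subst hab; exact hb2)
  have hh := shiftcore11 55 3 nwb11_74 (by decide) (fun B hB => forall_of_filter (P := fun A => A.card = 3 ∧ A ⊆ (Finset.univ : Finset (Fin 11))) (by decide) B (Multiset.mem_coe.mp hB)) deg_DB11_19 (by norm_num) (by norm_num) (threeBal_of_nodup _ _ hnd)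
  rw [show (129 : ℕ) = 74 + 55 from by norm_num]
  exact hh

def BL11_36 : List (Finset (Fin 11)) := [{0,1,2},{0,1,5},{0,1,10},{0,2,7},{0,3,9},{0,4,5},{0,4,9},{0,6,8},{0,6,10},{0,7,8},{1,3,5},{1,3,6},{1,4,6},{1,4,7},{1,7,9},{1,8,9},{1,8,10},{2,3,8},{2,4,6},{2,4,10},{2,5,9},{2,5,10},{2,6,7},{2,8,9},{3,4,9},{3,4,10},{3,5,7},{3,6,7},{3,8,10},{4,5,8},{4,7,8},{5,6,8},{5,6,9},{5,7,10},{6,9,10},{7,9,10}]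

lemma nwb11_36 : IsNWBTSOn (Finset.univ : Finset (Fin 11)) 11 36 (↑BL11_36) := by
  have hd1 : Dlev Finset.univ (↑BL11_36 : Multiset (Finset (Fin 11))) 2 1 = {({0,1} : Finset (Fin 11))} :=
    dlev_eq11 _ 2 1 [{0,1}] [] [] [] [] _ (by decide) (by decide) (by decide) (by decide) (by decide) (by decide)
  have hdm1 : Dlev Finset.univ (↑BL11_36 : Multiset (Finset (Fin 11))) 2 (-1) = {({0,3} : Finset (Fin 11)), ({1,2} : Finset (Fin 11)), ({2,3} : Finset (Fin 11))} :=
    dlev_eq11 _ 2 (-1) [{0,3},{1,2}] [{2,3}] [] [] [] _ (by decide) (by decide) (by decide) (by decide) (by decide) (by decide)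
  refine ⟨⟨by decide, by decide, ?_⟩, threeBal_of_nodup _ _ (Multiset.coe_nodup.mpr (by decide)),
    2, -2, by norm_num, ⟨by decide, by decide, by decide⟩, ?_,
    Or.inl ⟨⟨by norm_num, 2, by norm_num, Or.inl ⟨by norm_num, by norm_num⟩, Or.inl (by norm_num)⟩, Or.inr (Or.inr (Or.inr ⟨rfl, ?tri, ?c1, ?c2⟩))⟩⟩
  · intro B hB
    exact forall_of_filter (P := fun A => A.card = 3 ∧ A ⊆ (Finset.univ : Finset (Fin 11))) (by decide) B (Multiset.mem_coe.mp hB)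
  · unfold PairRangeOn
    refine pairs_forall11 ?_ ?_ ?_ ?_ ?_
    all_goals exact forall_of_filter (by decide)
  case tri =>
    rw [hd1, hdm1]
    exact ⟨0, 1, 2, 3, by decide, by decide, by decide, by decide, by decide, by decide, by decide⟩
  case c1 => rw [hd1]; decide
  case c2 => rw [hdm1]; decide

def DA11_36 : List (Finset (Fin 11)) := [{0,1,4},{0,1,6},{0,1,7},{0,2,8},{0,2,9},{0,2,10},{0,3,4},{0,3,6},{0,3,8},{0,4,10},{0,5,7},{0,5,8},{0,5,10},{0,6,9},{0,7,9},{1,2,4},{1,2,6},{1,2,10},{1,3,8},{1,3,9},{1,3,10},{1,4,8},{1,5,7},{1,5,9},{1,5,10},{1,6,9},{1,7,8},{2,3,5},{2,3,7},{2,3,9},{2,4,5},{2,4,7},{2,5,6},{2,6,8},{2,7,8},{2,9,10},{3,4,6},{3,4,7},{3,5,8},{3,5,10},{3,6,10},{3,7,9},{4,5,6},{4,5,9},{4,6,8},{4,7,10},{4,8,9},{4,9,10},{5,6,7},{5,8,9},{6,7,9},{6,7,10},{6,8,10},{7,8,10},{8,9,10}]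
def DB11_36 : List (Finset (Fin 11)) := [{0,1,3},{0,1,8},{0,1,9},{0,2,3},{0,2,4},{0,2,6},{0,3,5},{0,4,7},{0,4,8},{0,5,6},{0,5,9},{0,6,7},{0,7,10},{0,8,10},{0,9,10},{1,2,5},{1,2,7},{1,2,9},{1,3,4},{1,3,7},{1,4,9},{1,4,10},{1,5,6},{1,5,8},{1,6,8},{1,6,10},{1,7,10},{2,3,6},{2,3,10},{2,4,8},{2,4,9},{2,5,7},{2,5,8},{2,6,10},{2,7,9},{2,8,10},{3,4,5},{3,4,8},{3,5,6},{3,6,9},{3,7,8},{3,7,10},{3,8,9},{3,9,10},{4,5,7},{4,5,10},{4,6,7},{4,6,9},{4,6,10},{5,7,9},{5,8,10},{5,9,10},{6,7,8},{6,8,9},{7,8,9}]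

lemma deg_DA11_36 : ∀ p ∈ (Finset.univ : Finset (Fin 11)).powersetCard 2, lamF (↑DA11_36 : Multiset (Finset (Fin 11))) p = 3 := by
  refine pairs_forall11 ?_ ?_ ?_ ?_ ?_
  all_goals exact forall_of_filter (by decide)


lemma deg_DB11_36 : ∀ p ∈ (Finset.univ : Finset (Fin 11)).powersetCard 2, lamF (↑DB11_36 : Multiset (Finset (Fin 11))) p = 3 := by
  refine pairs_forall11 ?_ ?_ ?_ ?_ ?_
  all_goals exact forall_of_filter (by decide)


lemma nwb11_91 : IsNWBTSOn (Finset.univ : Finset (Fin 11)) 11 91 ((↑BL11_36 : Multiset (Finset (Fin 11))) + (↑DA11_36 : Multiset (Finset (Fin 11)))) := by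
  have hdj0 : ∀ a ∈ BL11_36, a ∉ DA11_36 := forall_of_filter (by decide)
  have hnd : Multiset.Nodup ((↑BL11_36 : Multiset (Finset (Fin 11))) + (↑DA11_36 : Multiset (Finset (Fin 11)))) := by
    rw [Multiset.coe_add]
    refine Multiset.coe_nodup.mpr (List.nodup_append.mpr ⟨by decide, by decide, ?_⟩)
    intro a ha b hb2 hab
    exact hdj0 a ha (by subst hab; exact hb2)
  have hh := shiftcore11 55 3 nwb11_36 (by decide) (fun B hB => forall_of_filter (P := fun A => A.card = 3 ∧ A ⊆ (Finset.univ : Finset (Fin 11))) (by decide) B (Multiset.mem_coe.mp hB)) deg_DA11_36 (by norm_num) (by norm_num) (threeBal_of_nodup _ _ hnd)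
  rw [show (91 : ℕ) = 36 + 55 from by norm_num]
  exact hh


lemma nwb11_146 : IsNWBTSOn (Finset.univ : Finset (Fin 11)) 11 146 (((↑BL11_36 : Multiset (Finset (Fin 11))) + (↑DA11_36 : Multiset (Finset (Fin 11)))) + (↑DB11_36 : Multiset (Finset (Fin 11)))) := by
  have hdj0 : ∀ a ∈ BL11_36, a ∉ DB11_36 := forall_of_filter (by decide)
  have hdj1 : ∀ a ∈ DA11_36, a ∉ DB11_36 := forall_of_filter (by decide)
  have hnd : Multiset.Nodup (((↑BL11_36 : Multiset (Finset (Fin 11))) + (↑DA11_36 : Multiset (Finset (Fin 11)))) + (↑DB11_36 : Multiset (Finset (Fin 11)))) := by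
    rw [Multiset.coe_add, Multiset.coe_add]
    refine Multiset.coe_nodup.mpr (List.nodup_append.mpr ⟨by decide, by decide, ?_⟩)
    intro a ha b hb2 hab
    rcases List.mem_append.mp ha with ha | ha
    · exact hdj0 a ha (by subst hab; exact hb2)
    · exact hdj1 a ha (by subst hab; exact hb2)
  have hh := shiftcore11 55 3 nwb11_91 (by decide) (fun B hB => forall_of_filter (P := fun A => A.card = 3 ∧ A ⊆ (Finset.univ : Finset (Fin 11))) (by decide) B (Multiset.mem_coe.mp hB)) deg_DB11_36 (by norm_num) (by norm_num) (threeBal_of_nodup _ _ hnd)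
  rw [show (146 : ℕ) = 91 + 55 from by norm_num]
  exact hh

def BL11_37 : List (Finset (Fin 11)) := [{0,1,2},{0,1,7},{0,1,10},{0,2,3},{0,2,8},{0,3,5},{0,4,9},{0,4,10},{0,5,6},{0,6,8},{0,7,9},{1,3,8},{1,3,9},{1,4,6},{1,4,9},{1,5,7},{1,5,10},{1,6,8},{2,3,10},{2,4,5},{2,4,7},{2,5,6},{2,6,9},{2,7,10},{2,8,9},{3,4,6},{3,4,10},{3,5,9},{3,6,7},{3,7,8},{4,5,8},{4,7,8},{5,7,9},{5,8,10},{6,7,10},{6,9,10},{8,9,10}]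

lemma nwb11_37 : IsNWBTSOn (Finset.univ : Finset (Fin 11)) 11 37 (↑BL11_37) := by
  have hd1 : Dlev Finset.univ (↑BL11_37 : Multiset (Finset (Fin 11))) 2 1 = {({0,1} : Finset (Fin 11)), ({0,2} : Finset (Fin 11))} :=
    dlev_eq11 _ 2 1 [{0,1},{0,2}] [] [] [] [] _ (by decide) (by decide) (by decide) (by decide) (by decide) (by decide)
  have hdm1 : Dlev Finset.univ (↑BL11_37 : Multiset (Finset (Fin 11))) 2 (-1) = {({1,2} : Finset (Fin 11))} :=
    dlev_eq11 _ 2 (-1) [{1,2}] [] [] [] [] _ (by decide) (by decide) (by decide) (by decide) (by decide) (by decide)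
  refine ⟨⟨by decide, by decide, ?_⟩, threeBal_of_nodup _ _ (Multiset.coe_nodup.mpr (by decide)),
    2, 1, by norm_num, ⟨by decide, by decide, by decide⟩, ?_,
    Or.inl ⟨⟨by norm_num, 2, by norm_num, Or.inl ⟨by norm_num, by norm_num⟩, Or.inr (by norm_num)⟩, Or.inl ⟨rfl, ?tri, ?c1, ?c2⟩⟩⟩
  · intro B hB
    exact forall_of_filter (P := fun A => A.card = 3 ∧ A ⊆ (Finset.univ : Finset (Fin 11))) (by decide) B (Multiset.mem_coe.mp hB)
  · unfold PairRangeOn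
    refine pairs_forall11 ?_ ?_ ?_ ?_ ?_
    all_goals exact forall_of_filter (by decide)
  case tri =>
    rw [hd1, hdm1]
    exact ⟨0, 1, 2, by decide, by decide, by decide, by decide⟩
  case c1 => rw [hd1]; decide
  case c2 => rw [hdm1]; decide

def DA11_37 : List (Finset (Fin 11)) := [{0,1,4},{0,1,5},{0,1,6},{0,2,4},{0,2,5},{0,2,7},{0,3,7},{0,3,9},{0,3,10},{0,4,6},{0,5,8},{0,6,7},{0,8,9},{0,8,10},{0,9,10},{1,2,3},{1,2,6},{1,2,8},{1,3,5},{1,3,10},{1,4,7},{1,4,10},{1,5,9},{1,6,10},{1,7,8},{1,7,9},{1,8,9},{2,3,7},{2,3,9},{2,4,6},{2,4,8},{2,5,8},{2,5,10},{2,6,10},{2,7,9},{2,9,10},{3,4,7},{3,4,8},{3,4,9},{3,5,6},{3,5,8},{3,6,8},{3,6,10},{4,5,7},{4,5,9},{4,5,10},{4,6,9},{4,8,10},{5,6,7},{5,6,9},{5,7,10},{6,7,8},{6,8,9},{7,8,10},{7,9,10}]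
def DB11_37 : List (Finset (Fin 11)) := [{0,1,3},{0,1,8},{0,1,9},{0,2,6},{0,2,9},{0,2,10},{0,3,6},{0,3,8},{0,4,5},{0,4,7},{0,4,8},{0,5,7},{0,5,9},{0,6,10},{0,7,10},{1,2,4},{1,2,7},{1,2,10},{1,3,4},{1,3,7},{1,4,5},{1,5,6},{1,5,8},{1,6,7},{1,6,9},{1,8,10},{1,9,10},{2,3,4},{2,3,5},{2,3,6},{2,4,9},{2,5,7},{2,5,9},{2,6,8},{2,7,8},{2,8,10},{3,4,5},{3,5,10},{3,6,9},{3,7,9},{3,7,10},{3,8,9},{3,8,10},{4,6,7},{4,6,8},{4,6,10},{4,7,10},{4,8,9},{4,9,10},{5,6,8},{5,6,10},{5,7,8},{5,9,10},{6,7,9},{7,8,9}]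

lemma deg_DA11_37 : ∀ p ∈ (Finset.univ : Finset (Fin 11)).powersetCard 2, lamF (↑DA11_37 : Multiset (Finset (Fin 11))) p = 3 := by
  refine pairs_forall11 ?_ ?_ ?_ ?_ ?_
  all_goals exact forall_of_filter (by decide)


lemma deg_DB11_37 : ∀ p ∈ (Finset.univ : Finset (Fin 11)).powersetCard 2, lamF (↑DB11_37 : Multiset (Finset (Fin 11))) p = 3 := by
  refine pairs_forall11 ?_ ?_ ?_ ?_ ?_
  all_goals exact forall_of_filter (by decide)


lemma nwb11_92 : IsNWBTSOn (Finset.univ : Finset (Fin 11)) 11 92 ((↑BL11_37 : Multiset (Finset (Fin 11))) + (↑DA11_37 : Multiset (Finset (Fin 11)))) := by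
  have hdj0 : ∀ a ∈ BL11_37, a ∉ DA11_37 := forall_of_filter (by decide)
  have hnd : Multiset.Nodup ((↑BL11_37 : Multiset (Finset (Fin 11))) + (↑DA11_37 : Multiset (Finset (Fin 11)))) := by
    rw [Multiset.coe_add]
    refine Multiset.coe_nodup.mpr (List.nodup_append.mpr ⟨by decide, by decide, ?_⟩)
    intro a ha b hb2 hab
    exact hdj0 a ha (by subst hab; exact hb2)
  have hh := shiftcore11 55 3 nwb11_37 (by decide) (fun B hB => forall_of_filter (P := fun A => A.card = 3 ∧ A ⊆ (Finset.univ : Finset (Fin 11))) (by decide) B (Multiset.mem_coe.mp hB)) deg_DA11_37 (by norm_num) (by norm_num) (threeBal_of_nodup _ _ hnd)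
  rw [show (92 : ℕ) = 37 + 55 from by norm_num]
  exact hh


lemma nwb11_147 : IsNWBTSOn (Finset.univ : Finset (Fin 11)) 11 147 (((↑BL11_37 : Multiset (Finset (Fin 11))) + (↑DA11_37 : Multiset (Finset (Fin 11)))) + (↑DB11_37 : Multiset (Finset (Fin 11)))) := by
  have hdj0 : ∀ a ∈ BL11_37, a ∉ DB11_37 := forall_of_filter (by decide)
  have hdj1 : ∀ a ∈ DA11_37, a ∉ DB11_37 := forall_of_filter (by decide)
  have hnd : Multiset.Nodup (((↑BL11_37 : Multiset (Finset (Fin 11))) + (↑DA11_37 : Multiset (Finset (Fin 11)))) + (↑DB11_37 : Multiset (Finset (Fin 11)))) := by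
    rw [Multiset.coe_add, Multiset.coe_add]
    refine Multiset.coe_nodup.mpr (List.nodup_append.mpr ⟨by decide, by decide, ?_⟩)
    intro a ha b hb2 hab
    rcases List.mem_append.mp ha with ha | ha
    · exact hdj0 a ha (by subst hab; exact hb2)
    · exact hdj1 a ha (by subst hab; exact hb2)
  have hh := shiftcore11 55 3 nwb11_92 (by decide) (fun B hB => forall_of_filter (P := fun A => A.card = 3 ∧ A ⊆ (Finset.univ : Finset (Fin 11))) (by decide) B (Multiset.mem_coe.mp hB)) deg_DB11_37 (by norm_num) (by norm_num) (threeBal_of_nodup _ _ hnd)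
  rw [show (147 : ℕ) = 92 + 55 from by norm_num]
  exact hh

end NWBConstruction

/-- NWBTS(5;b) and NWBTS(11;b). -/
theorem stmt_12 :
    (∀ b : ℕ, (b % 10 = 3 ∨ b % 10 = 4 ∨ b % 10 = 6 ∨ b % 10 = 7) →
      ∃ F : Multiset (Finset (Fin 5)), IsNWBTSOn Finset.univ 5 b F) ∧
    (∀ b : ℕ, (b % 55 = 18 ∨ b % 55 = 19 ∨ b % 55 = 36 ∨ b % 55 = 37) →
      ∃ F : Multiset (Finset (Fin 11)), IsNWBTSOn Finset.univ 11 b F) := by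
  constructor
  · intro b hb
    have h0 : ∃ F : Multiset (Finset (Fin 5)), IsNWBTSOn Finset.univ 5 (b % 10) F := by
      rcases hb with h | h | h | h <;> rw [h]
      exacts [⟨_, nwb5_3⟩, ⟨_, nwb5_4⟩, ⟨_, nwb5_6⟩, ⟨_, nwb5_7⟩]
    have hc := chain5 (b % 10) h0 (b / 10)
    rwa [Nat.mod_add_div b 10] at hc
  · intro b hb
    have h165 : b % 165 = 18 ∨ b % 165 = 73 ∨ b % 165 = 128 ∨ b % 165 = 19 ∨ b % 165 = 74 ∨
        b % 165 = 129 ∨ b % 165 = 36 ∨ b % 165 = 91 ∨ b % 165 = 146 ∨ b % 165 = 37 ∨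
        b % 165 = 92 ∨ b % 165 = 147 := by omega
    have h0 : ∃ F : Multiset (Finset (Fin 11)), IsNWBTSOn Finset.univ 11 (b % 165) F := by
      rcases h165 with h|h|h|h|h|h|h|h|h|h|h|h <;> rw [h]
      exacts [⟨_, nwb11_18⟩, ⟨_, nwb11_73⟩, ⟨_, nwb11_128⟩, ⟨_, nwb11_19⟩, ⟨_, nwb11_74⟩,
        ⟨_, nwb11_129⟩, ⟨_, nwb11_36⟩, ⟨_, nwb11_91⟩, ⟨_, nwb11_146⟩, ⟨_, nwb11_37⟩,
        ⟨_, nwb11_92⟩, ⟨_, nwb11_147⟩]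
    have hc := chain11 (b % 165) h0 (b / 165)
    rwa [Nat.mod_add_div b 165] at hc

end DataPlacement
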